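/- arXiv:1910.00799 — 4 statements merged into one kernel-verified Lean document; each statement's English description precedes it below -/
import Mathlib

section
/- Let μ be a probability measure on ℝ^d with finite second moment and let Γ^(N) ⊂ ℝ^d be an L²-optimal quantization grid at level N, i.e. a set of at most N points with e_2(Γ^(N),μ) = e_{2,N}(μ) := inf{e_2(Γ,μ) : Γ ⊂ ℝ^d finite, |Γ| ≤ N}. Then the pushforward μ̂^N = μ ∘ Proj_{Γ^(N)}^{-1} under a Borel nearest-neighbour projection onto Γ^(N) satisfies: μ̂^N is supported on at most N points, μ̂^N ≤_cvx μ, and W_2(μ, μ̂^N) = inf{W_2(μ,ν) : ν a probability measure on ℝ^d supported on at most N points with ν ≤_cvx μ}; i.e. μ̂^N is a quadratic-Wasserstein projection of μ on the set of probability measures dominated by μ in the convex order whose support contains at most N elements. -/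
open MeasureTheory Metric
open scoped ENNReal RealInnerProductSpace

noncomputable section

abbrev Euc (d : ℕ) : Type := EuclideanSpace ℝ (Fin d)

/-- The Wasserstein "distance" of index `p`: infimum over couplings of the `p`-cost. -/
def Wp {d : ℕ} (p : ℝ) (μ ν : Measure (Euc d)) : ℝ :=
  sInf { r | ∃ M : Measure (Euc d × Euc d), IsProbabilityMeasure M ∧ M.fst = μ ∧ M.snd = ν ∧
      r = (∫ z, ‖z.1 - z.2‖ ^ p ∂M) ^ (1/p) }

/-- Quadratic quantization error of the grid `Γ` for `μ`. -/
def e2 {d : ℕ} (Γ : Finset (Euc d)) (μ : Measure (Euc d)) : ℝ :=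
  (∫ x, infDist x (Γ : Set (Euc d)) ^ 2 ∂μ) ^ (1/2 : ℝ)

/-- Optimal quadratic quantization error at level `N`. -/
def e2N {d : ℕ} (N : ℕ) (μ : Measure (Euc d)) : ℝ :=
  sInf { r | ∃ Γ : Finset (Euc d), Γ.Nonempty ∧ Γ.card ≤ N ∧ r = e2 Γ μ }

/-- `ν` is supported on at most `N` points. -/
def supportedOnAtMost {d : ℕ} (ν : Measure (Euc d)) (N : ℕ) : Prop :=
  ∃ s : Finset (Euc d), s.card ≤ N ∧ ν (((s : Set (Euc d)))ᶜ) = 0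

/-- Convex order `μ ≤_cvx ν` (tested on convex functions with linear growth). -/
def cvxOrder {d : ℕ} (μ ν : Measure (Euc d)) : Prop :=
  ∀ φ : Euc d → ℝ, ConvexOn ℝ Set.univ φ → (∃ C : ℝ, ∀ x, |φ x| ≤ C * (1 + ‖x‖)) →
    ∫ x, φ x ∂μ ≤ ∫ x, φ x ∂ν

lemma aux_rpow_two (x : ℝ) : x ^ (2:ℝ) = x ^ 2 := by
  rw [show (2:ℝ) = ((2:ℕ):ℝ) by norm_num, Real.rpow_natCast]

lemma aux_comp_meas {d : ℕ} {α : Type*} [MeasurableSpace α] {Γ : Finset (Euc d)}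
    {proj : Euc d → Euc d} (hprojmeas : Measurable proj)
    (hprojmem : ∀ x, proj x ∈ Γ) (g : Euc d → α) :
    Measurable (g ∘ proj) := by
  intro S hS
  have : (g ∘ proj) ⁻¹' S = proj ⁻¹' ((g ⁻¹' S) ∩ Γ) := by
    ext x
    simp only [Set.mem_preimage, Function.comp_apply, Set.mem_inter_iff]
    exact ⟨fun h => ⟨h, hprojmem x⟩, fun h => h.1⟩
  rw [this]
  exact hprojmeas (((Γ : Set (Euc d)).toFinite.inter_of_right _).measurableSet)

lemma aux_sq_bound (p q : ℝ) : (p + q)^2 ≤ 2*p^2 + 2*q^2 := by nlinarith [sq_nonneg (p - q)]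

lemma aux_coupling_lb {d : ℕ} (μ ν : Measure (Euc d)) [IsProbabilityMeasure μ]
    (hmom : Integrable (fun x => ‖x‖ ^ 2) μ)
    (s : Finset (Euc d)) (hs : ν ((s : Set (Euc d))ᶜ) = 0)
    (M : Measure (Euc d × Euc d)) (hM : IsProbabilityMeasure M)
    (hfst : M.fst = μ) (hsnd : M.snd = ν) :
    ∫ x, infDist x (s : Set (Euc d)) ^ 2 ∂μ ≤ ∫ z, ‖z.1 - z.2‖ ^ (2:ℝ) ∂M := by
  simp only [aux_rpow_two]
  obtain ⟨K, hK⟩ := (s.image fun c => ‖c‖^2).exists_le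
  have hKmem : ∀ c ∈ s, ‖c‖^2 ≤ K := fun c hc => hK _ (Finset.mem_image_of_mem _ hc)
  have hsmeas : MeasurableSet ((s : Set (Euc d))ᶜ) :=
    ((s : Set (Euc d)).toFinite.measurableSet).compl
  have hae : ∀ᵐ z ∂M, z.2 ∈ (s : Set (Euc d)) := by
    rw [ae_iff]
    have : {z : Euc d × Euc d | ¬ z.2 ∈ (s : Set (Euc d))} = Prod.snd ⁻¹' ((s : Set (Euc d))ᶜ) :=
      rfl
    rw [this, ← Measure.map_apply measurable_snd hsmeas]
    rw [show M.map Prod.snd = M.snd from rfl, hsnd, hs]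
  have hgcont : Continuous fun z : Euc d × Euc d => ‖z.1 - z.2‖^2 :=
    ((continuous_fst.sub continuous_snd).norm).pow 2
  have hfst_int : Integrable (fun z : Euc d × Euc d => ‖z.1‖^2) M := by
    have h1 : Integrable ((fun x : Euc d => ‖x‖^2) ∘ Prod.fst) M := by
      rw [← integrable_map_measure (show Continuous fun x : Euc d => ‖x‖^2 from
          continuous_norm.pow 2).aestronglyMeasurable
        measurable_fst.aemeasurable, show M.map Prod.fst = M.fst from rfl, hfst]
      exact hmom
    exact h1
  have hbound_int : Integrable (fun z : Euc d × Euc d => 2*‖z.1‖^2 + 2*K) M :=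
    (hfst_int.const_mul 2).add (integrable_const _)
  have hg_int : Integrable (fun z : Euc d × Euc d => ‖z.1 - z.2‖^2) M := by
    refine hbound_int.mono' hgcont.aestronglyMeasurable ?_
    filter_upwards [hae] with z hz
    have h2 : ‖z.1 - z.2‖^2 ≤ (‖z.1‖ + ‖z.2‖)^2 :=
      pow_le_pow_left₀ (norm_nonneg _) (norm_sub_le _ _) 2
    have h3 := aux_sq_bound ‖z.1‖ ‖z.2‖
    have h4 := hKmem _ hz
    rw [Real.norm_eq_abs, abs_of_nonneg (sq_nonneg _)]
    nlinarith
  have hmarg : ∫ x, infDist x (s : Set (Euc d)) ^ 2 ∂μ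
      = ∫ z, infDist z.1 (s : Set (Euc d)) ^ 2 ∂M := by
    rw [← hfst, show M.fst = M.map Prod.fst from rfl,
      integral_map measurable_fst.aemeasurable
        ((show Continuous fun x : Euc d => infDist x (s : Set (Euc d)) ^ 2 from
          (continuous_infDist_pt _).pow 2).aestronglyMeasurable)]
  rw [hmarg]
  refine integral_mono_of_nonneg ?_ hg_int ?_
  · filter_upwards with z using sq_nonneg _
  · filter_upwards [hae] with z hz
    have h1 : infDist z.1 (s : Set (Euc d)) ≤ dist z.1 z.2 := infDist_le_dist_of_mem hz
    rw [dist_eq_norm] at h1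
    exact pow_le_pow_left₀ infDist_nonneg h1 2

/-- If `Γ` is an `L²`-optimal quantization grid of `μ` at level `N`, then the
pushforward `μ̂` of `μ` under a nearest-neighbour projection onto `Γ` is supported on at most
`N` points, is dominated by `μ` in the convex order, and is a quadratic-Wasserstein projection
of `μ` on the set of probability measures dominated by `μ` in the convex order and supported
on at most `N` points. -/
theorem stmt1 {d : ℕ} (N : ℕ)
    (μ : Measure (Euc d)) [IsProbabilityMeasure μ]
    (hmom : Integrable (fun x => ‖x‖ ^ (2:ℝ)) μ)
    (Γ : Finset (Euc d)) (hne : Γ.Nonempty) (hcard : Γ.card ≤ N)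
    (hopt : e2 Γ μ = e2N N μ)
    (proj : Euc d → Euc d) (hprojmeas : Measurable proj)
    (hprojmem : ∀ x, proj x ∈ Γ)
    (hprojdist : ∀ x, dist x (proj x) = infDist x (Γ : Set (Euc d))) :
    supportedOnAtMost (μ.map proj) N
    ∧ cvxOrder (μ.map proj) μ
    ∧ Wp 2 μ (μ.map proj)
        = sInf { r | ∃ ν : Measure (Euc d), IsProbabilityMeasure ν ∧ supportedOnAtMost ν N ∧
            cvxOrder ν μ ∧ r = Wp 2 μ ν } := by
  classical
  set Cell : Euc d → Set (Euc d) := fun a => proj ⁻¹' {a} with hCell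
  have hCellMeas : ∀ a, MeasurableSet (Cell a) := fun a => hprojmeas (measurableSet_singleton a)
  have hmom2 : Integrable (fun x : Euc d => ‖x‖^2) μ := by
    have : (fun x : Euc d => ‖x‖ ^ (2:ℝ)) = fun x : Euc d => ‖x‖^2 :=
      funext fun x => aux_rpow_two _
    rwa [this] at hmom
  have hint1 : Integrable (fun x : Euc d => ‖x‖) μ := by
    refine (hmom2.add (integrable_const 1)).mono' continuous_norm.aestronglyMeasurable ?_
    filter_upwards with x
    simp only [Pi.add_apply]
    rw [Real.norm_eq_abs, abs_of_nonneg (norm_nonneg _)]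
    nlinarith [sq_nonneg (‖x‖ - 1), norm_nonneg x]
  have hintid : Integrable (fun x : Euc d => x) μ := by
    refine (hmom2.add (integrable_const 1)).mono' continuous_id.aestronglyMeasurable ?_
    filter_upwards with x
    show ‖x‖ ≤ ‖x‖^2 + 1
    nlinarith [sq_nonneg (‖x‖ - 1), norm_nonneg x]
  have hshift : ∀ c : Euc d, Integrable (fun x : Euc d => ‖x - c‖^2) μ := by
    intro c
    refine ((hmom2.const_mul 2).add (integrable_const (2*‖c‖^2))).mono'
      ((continuous_id.sub continuous_const).norm.pow 2).aestronglyMeasurable ?_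
    filter_upwards with x
    simp only [Pi.add_apply]
    rw [Real.norm_eq_abs, abs_of_nonneg (sq_nonneg _)]
    have h1 : ‖x - c‖^2 ≤ (‖x‖ + ‖c‖)^2 := pow_le_pow_left₀ (norm_nonneg _) (norm_sub_le _ _) 2
    nlinarith [aux_sq_bound ‖x‖ ‖c‖]
  have hUnion : (⋃ a ∈ Γ, Cell a) = Set.univ := by
    ext x
    simp only [Set.mem_iUnion, Set.mem_univ, iff_true, hCell, Set.mem_preimage,
      Set.mem_singleton_iff]
    exact ⟨proj x, hprojmem x, rfl⟩
  have hdisj : Set.Pairwise (↑Γ) (Function.onFun Disjoint Cell) := by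
    intro a _ b _ hab
    simp only [Function.onFun, Set.disjoint_left, hCell, Set.mem_preimage,
      Set.mem_singleton_iff]
    intro x hxa hxb
    exact hab (hxa ▸ hxb ▸ rfl)
  have hdecomp : ∀ f : Euc d → ℝ, Integrable f μ →
      ∫ x, f x ∂μ = ∑ a ∈ Γ, ∫ x in Cell a, f x ∂μ := by
    intro f hf
    rw [← setIntegral_univ (f := f) (μ := μ), ← hUnion]
    exact integral_biUnion_finset Γ (fun a _ => hCellMeas a) hdisj fun a _ => hf.integrableOn
  set m : Euc d → ℝ := fun a => (μ (Cell a)).toReal with hm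
  set bary : Euc d → Euc d := fun a =>
    if μ (Cell a) = 0 then a else (m a)⁻¹ • ∫ x in Cell a, x ∂μ with hbary
  have hmpos : ∀ a, μ (Cell a) ≠ 0 → 0 < m a := fun a ha =>
    ENNReal.toReal_pos ha (measure_ne_top μ _)
  have hbary_int : ∀ a, μ (Cell a) ≠ 0 → ∫ x in Cell a, x ∂μ = m a • bary a := by
    intro a ha
    rw [hbary]
    simp only [ha, if_false]
    rw [smul_inv_smul₀ (hmpos a ha).ne']
  -- parallel axis theorem per cell
  have hpar : ∀ a, ∫ x in Cell a, ‖x - bary a‖^2 ∂μ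
      = ∫ x in Cell a, ‖x - a‖^2 ∂μ - m a * ‖bary a - a‖^2 := by
    intro a
    by_cases ha : μ (Cell a) = 0
    · have hz : μ.restrict (Cell a) = 0 := Measure.restrict_eq_zero.mpr ha
      have hma : m a = 0 := by rw [hm]; simp [ha]
      rw [hz, hma]; simp
    · set v := bary a - a with hv
      have hxa_int : Integrable (fun x : Euc d => x - a) (μ.restrict (Cell a)) :=
        (hintid.sub (integrable_const a)).integrableOn
      have hinn_int : Integrable (fun x : Euc d => ⟪v, x - a⟫) (μ.restrict (Cell a)) :=
        hxa_int.const_inner v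
      have hsub_int : Integrable (fun x : Euc d => ‖x - a‖^2 - 2 * ⟪v, x - a⟫)
          (μ.restrict (Cell a)) := (hshift a).integrableOn.sub (hinn_int.const_mul 2)
      have hptw : ∀ x : Euc d, ‖x - bary a‖^2 = ‖x - a‖^2 - 2 * ⟪v, x - a⟫ + ‖v‖^2 := by
        intro x
        have h1 : x - bary a = (x - a) - v := by rw [hv]; abel
        rw [h1, norm_sub_sq_real, real_inner_comm]
      have hxint : ∫ x in Cell a, (x - a) ∂μ = m a • v := by
        rw [integral_sub hintid.integrableOn (integrable_const a).integrableOn,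
          hbary_int a ha, integral_const, measureReal_restrict_apply_univ, show μ.real (Cell a) = m a from rfl, hv, smul_sub]
      calc ∫ x in Cell a, ‖x - bary a‖^2 ∂μ
          = ∫ x in Cell a, (‖x - a‖^2 - 2 * ⟪v, x - a⟫ + ‖v‖^2) ∂μ := by
            simp only [hptw]
        _ = (∫ x in Cell a, (‖x - a‖^2 - 2 * ⟪v, x - a⟫) ∂μ) + m a * ‖v‖^2 := by
            rw [integral_add hsub_int (integrable_const _), integral_const,
              measureReal_restrict_apply_univ, show μ.real (Cell a) = m a from rfl, smul_eq_mul]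
        _ = ∫ x in Cell a, ‖x - a‖^2 ∂μ - 2 * (m a * ‖v‖^2) + m a * ‖v‖^2 := by
            rw [integral_sub (hshift a).integrableOn (hinn_int.const_mul 2),
              integral_const_mul 2 _, integral_inner hxa_int, hxint, real_inner_smul_right,
              real_inner_self_eq_norm_sq]
        _ = ∫ x in Cell a, ‖x - a‖^2 ∂μ - m a * ‖v‖^2 := by ring
  obtain ⟨a0, ha0⟩ := hne
  have hIint : Integrable (fun x : Euc d => infDist x (↑Γ : Set (Euc d)) ^ 2) μ := by
    refine (hshift a0).mono' ((continuous_infDist_pt _).pow 2).aestronglyMeasurable ?_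
    filter_upwards with x
    rw [Real.norm_eq_abs, abs_of_nonneg (sq_nonneg _)]
    refine pow_le_pow_left₀ infDist_nonneg ?_ 2
    rw [← dist_eq_norm]
    exact infDist_le_dist_of_mem ha0
  have hbddE : BddBelow {r | ∃ Δ : Finset (Euc d), Δ.Nonempty ∧ Δ.card ≤ N ∧ r = e2 Δ μ} := by
    refine ⟨0, ?_⟩
    rintro r ⟨Δ, -, -, rfl⟩
    exact Real.rpow_nonneg (integral_nonneg fun x => sq_nonneg _) _
  have hcellNorm : ∀ a ∈ Γ, ∀ x ∈ Cell a, infDist x (↑Γ : Set (Euc d)) = ‖x - a‖ := by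
    intro a ha x hx
    have hxa : proj x = a := hx
    rw [← hprojdist x, hxa, dist_eq_norm]
  have hIeq : ∫ x, infDist x (↑Γ : Set (Euc d)) ^ 2 ∂μ
      = ∑ a ∈ Γ, ∫ x in Cell a, ‖x - a‖^2 ∂μ := by
    rw [hdecomp _ hIint]
    refine Finset.sum_congr rfl fun a ha => ?_
    exact setIntegral_congr_fun (hCellMeas a) fun x hx => by rw [hcellNorm a ha x hx]
  have hstat : ∀ a ∈ Γ, ∫ x in Cell a, x ∂μ = m a • a := by
    set Γ' := Γ.image bary with hΓ'
    have hΓ'ne : Γ'.Nonempty := ⟨bary a0, Finset.mem_image_of_mem _ ha0⟩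
    have h1 : e2 Γ μ ≤ e2 Γ' μ := by
      rw [hopt]
      exact csInf_le hbddE ⟨Γ', hΓ'ne, (Finset.card_image_le).trans hcard, rfl⟩
    obtain ⟨K, hK⟩ := (Γ'.image fun c => ‖c‖^2).exists_le
    have hKmem : ∀ c ∈ Γ', ‖c‖^2 ≤ K := fun c hc => hK _ (Finset.mem_image_of_mem _ hc)
    have hbp : Measurable (bary ∘ proj) := aux_comp_meas hprojmeas hprojmem bary
    have hJint : Integrable (fun x : Euc d => ‖x - bary (proj x)‖^2) μ := by
      refine ((hmom2.const_mul 2).add (integrable_const (2*K))).mono'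
        (((measurable_id.sub hbp).norm.pow_const 2).aestronglyMeasurable) ?_
      filter_upwards with x
      simp only [Pi.add_apply]
      rw [Real.norm_eq_abs, abs_of_nonneg (sq_nonneg _)]
      have h2 : ‖x - bary (proj x)‖^2 ≤ (‖x‖ + ‖bary (proj x)‖)^2 :=
        pow_le_pow_left₀ (norm_nonneg _) (norm_sub_le _ _) 2
      have h4 := hKmem _ (Finset.mem_image_of_mem bary (hprojmem x))
      nlinarith [aux_sq_bound ‖x‖ ‖bary (proj x)‖]
    have hII' : ∫ x, infDist x (↑Γ : Set (Euc d)) ^ 2 ∂μ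
        ≤ ∫ x, infDist x (↑Γ' : Set (Euc d)) ^ 2 ∂μ := by
      by_contra hcon
      push_neg at hcon
      have := Real.rpow_lt_rpow (integral_nonneg fun x => sq_nonneg _) hcon
        (by norm_num : (0:ℝ) < 1/2)
      exact absurd h1 (not_le.mpr this)
    have hI'J : ∫ x, infDist x (↑Γ' : Set (Euc d)) ^ 2 ∂μ
        ≤ ∫ x, ‖x - bary (proj x)‖^2 ∂μ := by
      refine integral_mono_of_nonneg (Filter.Eventually.of_forall fun x => sq_nonneg _)
        hJint (Filter.Eventually.of_forall fun x => ?_)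
      refine pow_le_pow_left₀ infDist_nonneg ?_ 2
      rw [← dist_eq_norm]
      exact infDist_le_dist_of_mem (Finset.mem_coe.mpr (Finset.mem_image_of_mem bary (hprojmem x)))
    have hJeq : ∫ x, ‖x - bary (proj x)‖^2 ∂μ
        = ∑ a ∈ Γ, ∫ x in Cell a, ‖x - bary a‖^2 ∂μ := by
      rw [hdecomp _ hJint]
      refine Finset.sum_congr rfl fun a ha => ?_
      refine setIntegral_congr_fun (hCellMeas a) fun x hx => ?_
      rw [show proj x = a from hx]
    have hnn : ∀ a ∈ Γ, 0 ≤ m a * ‖bary a - a‖^2 := fun a _ =>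
      mul_nonneg ENNReal.toReal_nonneg (sq_nonneg _)
    have hsum0 : ∑ a ∈ Γ, m a * ‖bary a - a‖^2 ≤ 0 := by
      have hch := hII'.trans hI'J
      rw [hJeq, hIeq] at hch
      have h2 : ∑ a ∈ Γ, ∫ x in Cell a, ‖x - bary a‖^2 ∂μ
          = ∑ a ∈ Γ, (∫ x in Cell a, ‖x - a‖^2 ∂μ - m a * ‖bary a - a‖^2) :=
        Finset.sum_congr rfl fun a _ => hpar a
      rw [h2, Finset.sum_sub_distrib] at hch
      linarith
    have hzero : ∀ a ∈ Γ, m a * ‖bary a - a‖^2 = 0 := fun a ha =>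
      (Finset.sum_eq_zero_iff_of_nonneg hnn).mp
        (le_antisymm hsum0 (Finset.sum_nonneg hnn)) a ha
    intro a ha
    by_cases hz : μ (Cell a) = 0
    · rw [Measure.restrict_eq_zero.mpr hz, show m a = 0 by rw [hm]; simp [hz]]
      simp
    · have h4 : bary a = a := by
        rcases mul_eq_zero.mp (hzero a ha) with h | h
        · exact absurd h (hmpos a hz).ne'
        · exact sub_eq_zero.mp (norm_eq_zero.mp (pow_eq_zero_iff two_ne_zero |>.mp h))
      rw [hbary_int a hz, h4]
  -- Part 1
  have hΓmeasc : MeasurableSet ((Γ : Set (Euc d))ᶜ) :=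
    ((Γ : Set (Euc d)).toFinite.measurableSet).compl
  have hhat0 : (μ.map proj) ((Γ : Set (Euc d))ᶜ) = 0 := by
    rw [Measure.map_apply hprojmeas hΓmeasc]
    have hpre : proj ⁻¹' ((Γ : Set (Euc d))ᶜ) = ∅ := by
      ext x; simp [hprojmem x]
    rw [hpre, measure_empty]
  have hsupp : supportedOnAtMost (μ.map proj) N := ⟨Γ, hcard, hhat0⟩
  haveI hprob : IsProbabilityMeasure (μ.map proj) :=
    Measure.isProbabilityMeasure_map hprojmeas.aemeasurable
  -- Part 2
  have hcvx : cvxOrder (μ.map proj) μ := by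
    rintro φ hφ ⟨C, hC⟩
    have hφc : Continuous φ := continuousOn_univ.mp (hφ.continuousOn isOpen_univ)
    have hφint : Integrable φ μ := by
      refine ((hint1.const_mul |C|).add (integrable_const |C|)).mono'
        hφc.aestronglyMeasurable ?_
      filter_upwards with x
      simp only [Pi.add_apply]
      rw [Real.norm_eq_abs]
      calc |φ x| ≤ C * (1 + ‖x‖) := hC x
        _ ≤ |C| * (1 + ‖x‖) := mul_le_mul_of_nonneg_right (le_abs_self C) (by positivity)
        _ = |C| * ‖x‖ + |C| := by ring
    obtain ⟨K', hK'⟩ := (Γ.image fun a => |φ a|).exists_le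
    have hK'mem : ∀ a ∈ Γ, |φ a| ≤ K' := fun a ha => hK' _ (Finset.mem_image_of_mem _ ha)
    have hcomp_meas : Measurable (φ ∘ proj) := aux_comp_meas hprojmeas hprojmem φ
    have hcomp_int : Integrable (fun x => φ (proj x)) μ := by
      refine (integrable_const K').mono' hcomp_meas.aestronglyMeasurable ?_
      filter_upwards with x
      rw [Real.norm_eq_abs]
      exact hK'mem _ (hprojmem x)
    rw [integral_map hprojmeas.aemeasurable hφc.aestronglyMeasurable,
      hdecomp _ hcomp_int, hdecomp _ hφint]
    refine Finset.sum_le_sum fun a ha => ?_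
    have h1 : ∫ x in Cell a, φ (proj x) ∂μ = m a * φ a := by
      rw [setIntegral_congr_fun (hCellMeas a) (g := fun _ => φ a)
        (fun x hx => by rw [show proj x = a from hx]), setIntegral_const, show μ.real (Cell a) = m a from rfl, smul_eq_mul]
    rw [h1]
    by_cases hz : μ (Cell a) = 0
    · rw [Measure.restrict_eq_zero.mpr hz, show m a = 0 by rw [hm]; simp [hz]]
      simp
    · haveI : NeZero (μ.restrict (Cell a)) := ⟨fun h => hz (Measure.restrict_eq_zero.mp h)⟩
      have hj := hφ.map_average_le (continuousOn_univ.mpr hφc) isClosed_univ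
        (μ := μ.restrict (Cell a)) (Filter.Eventually.of_forall fun x => Set.mem_univ x) (f := id)
        hintid.integrableOn hφint.integrableOn
      rw [average_eq, average_eq, measureReal_restrict_apply_univ, show μ.real (Cell a) = m a from rfl] at hj
      simp only [id_eq] at hj
      rw [show (∫ x in Cell a, x ∂μ) = m a • a from hstat a ha,
        inv_smul_smul₀ (hmpos a hz).ne', smul_eq_mul] at hj
      have h5 := mul_le_mul_of_nonneg_left hj (le_of_lt (hmpos a hz))
      rwa [← mul_assoc, mul_inv_cancel₀ (hmpos a hz).ne', one_mul] at h5
  refine ⟨hsupp, hcvx, ?_⟩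
  -- Part 3
  set μhat := μ.map proj with hμhat
  have hWel_nonneg : ∀ (ν' : Measure (Euc d)) (r : ℝ),
      (∃ M : Measure (Euc d × Euc d), IsProbabilityMeasure M ∧ M.fst = μ ∧ M.snd = ν' ∧
        r = (∫ z, ‖z.1 - z.2‖ ^ (2:ℝ) ∂M) ^ (1/(2:ℝ))) → 0 ≤ r := by
    rintro ν' r ⟨M, _, _, _, rfl⟩
    exact Real.rpow_nonneg (integral_nonneg fun z => Real.rpow_nonneg (norm_nonneg _) _) _
  have hmeas_pair : Measurable fun x : Euc d => (x, proj x) := measurable_id.prodMk hprojmeas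
  set M₀ := μ.map (fun x : Euc d => (x, proj x)) with hM₀
  haveI hM₀prob : IsProbabilityMeasure M₀ := Measure.isProbabilityMeasure_map hmeas_pair.aemeasurable
  have hM₀fst : M₀.fst = μ := by
    rw [show M₀.fst = M₀.map Prod.fst from rfl, hM₀,
      Measure.map_map measurable_fst hmeas_pair]
    have hc : (Prod.fst ∘ fun x : Euc d => (x, proj x)) = id := rfl
    rw [hc, Measure.map_id]
  have hM₀snd : M₀.snd = μhat := by
    rw [show M₀.snd = M₀.map Prod.snd from rfl, hM₀,
      Measure.map_map measurable_snd hmeas_pair]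
    rfl
  have hcost₀ : ∫ z, ‖z.1 - z.2‖ ^ (2:ℝ) ∂M₀ = ∫ x, infDist x (↑Γ : Set (Euc d)) ^ 2 ∂μ := by
    have hcont : Continuous fun z : Euc d × Euc d => ‖z.1 - z.2‖ ^ (2:ℝ) := by
      have : (fun z : Euc d × Euc d => ‖z.1 - z.2‖ ^ (2:ℝ))
          = fun z : Euc d × Euc d => ‖z.1 - z.2‖ ^ 2 := funext fun z => aux_rpow_two _
      rw [this]
      exact ((continuous_fst.sub continuous_snd).norm).pow 2
    rw [hM₀, integral_map hmeas_pair.aemeasurable hcont.aestronglyMeasurable]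
    refine integral_congr_ae (Filter.Eventually.of_forall fun x => ?_)
    simp only [aux_rpow_two]
    rw [← hprojdist x, dist_eq_norm]
  have hW_le : Wp 2 μ μhat ≤ e2 Γ μ := by
    refine csInf_le ⟨0, fun r hr => hWel_nonneg μhat r hr⟩ ?_
    exact ⟨M₀, hM₀prob, hM₀fst, hM₀snd, by rw [e2, hcost₀]⟩
  have hW_ge : e2 Γ μ ≤ Wp 2 μ μhat := by
    refine le_csInf ⟨e2 Γ μ, M₀, hM₀prob, hM₀fst, hM₀snd, by rw [e2, hcost₀]⟩ ?_
    rintro r ⟨M, hM, hf, hs, rfl⟩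
    rw [e2]
    exact Real.rpow_le_rpow (integral_nonneg fun x => sq_nonneg _)
      (aux_coupling_lb μ μhat hmom2 Γ hhat0 M hM hf hs) (by norm_num)
  have hle_all : ∀ r ∈ { r | ∃ ν : Measure (Euc d), IsProbabilityMeasure ν ∧
      supportedOnAtMost ν N ∧ cvxOrder ν μ ∧ r = Wp 2 μ ν }, Wp 2 μ μhat ≤ r := by
    rintro r ⟨ν, hν, ⟨s, hscard, hs0⟩, hcvxν, rfl⟩
    have hsne : s.Nonempty := by
      rw [Finset.nonempty_iff_ne_empty]
      rintro rfl
      simp only [Finset.coe_empty, Set.compl_empty] at hs0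
      have := hν.measure_univ
      rw [hs0] at this
      exact zero_ne_one this
    have h2 : e2 s μ ≤ Wp 2 μ ν := by
      haveI := hν
      refine le_csInf ⟨_, μ.prod ν, inferInstance, Measure.fst_prod, Measure.snd_prod, rfl⟩ ?_
      rintro r' ⟨M, hM, hf', hs', rfl⟩
      rw [e2]
      exact Real.rpow_le_rpow (integral_nonneg fun x => sq_nonneg _)
        (aux_coupling_lb μ ν hmom2 s hs0 M hM hf' hs') (by norm_num)
    have h3 : e2 Γ μ ≤ e2 s μ := by
      rw [hopt]
      exact csInf_le hbddE ⟨s, hsne, hscard, rfl⟩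
    exact hW_le.trans (h3.trans h2)
  refine le_antisymm (le_csInf ⟨_, μhat, hprob, hsupp, hcvx, rfl⟩ hle_all) ?_
  refine csInf_le ⟨0, ?_⟩ ⟨μhat, hprob, hsupp, hcvx, rfl⟩
  rintro r ⟨ν, hν, _, _, rfl⟩
  exact Real.sInf_nonneg fun r' hr' => hWel_nonneg ν r' hr'

end
end

section
/- Let Z be an integrable centered ℝ^q-valued random vector and A ⊂ ℝ^q a Borel set. Set Z^A = Z·1_{{Z ∈ A}}. If E Z^A = 0, then Z^A ≤_cvx Z. -/
open MeasureTheory ProbabilityTheory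
open scoped ENNReal

noncomputable section

/-- Convex order `X ≤_cvx Y` between random vectors (tested on convex functions with linear
growth). -/
def cvxLE {Ω F : Type*} [MeasurableSpace Ω] [NormedAddCommGroup F] [NormedSpace ℝ F]
    (P : Measure Ω) (X Y : Ω → F) : Prop :=
  ∀ φ : F → ℝ, ConvexOn ℝ Set.univ φ → (∃ C : ℝ, ∀ x, |φ x| ≤ C * (1 + ‖x‖)) →
    ∫ ω, φ (X ω) ∂P ≤ ∫ ω, φ (Y ω) ∂P

/-- **Truncation lemma.** If `Z` is an integrable centered random vector and
`Z^A = Z·1_{Z ∈ A}` is still centered, then `Z^A ≤_cvx Z`. -/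
theorem stmt11 {Ω : Type*} [mΩ : MeasurableSpace Ω] (P : Measure Ω) [IsProbabilityMeasure P]
    (q : ℕ) (Z : Ω → Euc q)
    (hZm : Measurable Z) (hZint : Integrable Z P)
    (hZcent : ∫ ω, Z ω ∂P = 0)
    (A : Set (Euc q)) (hA : MeasurableSet A)
    (hcent : ∫ ω, Set.indicator A id (Z ω) ∂P = 0) :
    cvxLE P (fun ω => Set.indicator A id (Z ω)) Z := by
  rintro φ hφ ⟨C, hC⟩
  set B : Set Ω := Z ⁻¹' A with hB
  have hBm : MeasurableSet B := hZm hA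
  have hφc : Continuous φ := by
    rw [← continuousOn_univ]
    exact hφ.continuousOn isOpen_univ
  have hind : ∀ ω, Set.indicator A id (Z ω) = B.indicator Z ω := by
    intro ω
    by_cases h : Z ω ∈ A <;> simp [Set.indicator, h, hB]
  -- integrability of φ ∘ Z
  have hφZint : Integrable (fun ω => φ (Z ω)) P := by
    have hdom : Integrable (fun ω => C * (1 + ‖Z ω‖)) P :=
      ((integrable_const (1:ℝ)).add hZint.norm).const_mul C
    refine hdom.mono' (((hφc.measurable.comp hZm)).aestronglyMeasurable) ?_
    · filter_upwards with ω
      simpa [Real.norm_eq_abs] using hC (Z ω)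
  simp only [hind]
  have hcent' : ∫ ω, B.indicator Z ω ∂P = 0 := by
    simpa only [hind] using hcent
  have hintB : ∫ ω in B, Z ω ∂P = 0 := by
    rw [← integral_indicator hBm]; exact hcent'
  have hsplitZ : ∫ ω in B, Z ω ∂P + ∫ ω in Bᶜ, Z ω ∂P = ∫ ω, Z ω ∂P :=
    integral_add_compl hBm hZint
  have hintBc : ∫ ω in Bᶜ, Z ω ∂P = 0 := by
    rw [hintB, hZcent, zero_add] at hsplitZ; exact hsplitZ
  have hkey : (fun ω => φ (B.indicator Z ω)) =
      fun ω => B.indicator (fun ω => φ (Z ω)) ω + Bᶜ.indicator (fun _ => φ 0) ω := by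
    funext ω
    by_cases h : ω ∈ B <;>
      simp [Set.indicator_of_mem, Set.indicator_of_notMem, h]
  have hlhs : ∫ ω, φ (B.indicator Z ω) ∂P
      = (∫ ω in B, φ (Z ω) ∂P) + (P Bᶜ).toReal * φ 0 := by
    rw [hkey, integral_add (hφZint.indicator hBm) ((integrable_const _).indicator hBm.compl),
      integral_indicator hBm, integral_indicator hBm.compl, setIntegral_const, smul_eq_mul, measureReal_def]
  have hrhs : ∫ ω, φ (Z ω) ∂P = (∫ ω in B, φ (Z ω) ∂P) + ∫ ω in Bᶜ, φ (Z ω) ∂P :=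
    (integral_add_compl hBm hφZint).symm
  rw [hlhs, hrhs]
  have hmain : (P Bᶜ).toReal * φ 0 ≤ ∫ ω in Bᶜ, φ (Z ω) ∂P := by
    by_cases h0 : P Bᶜ = 0
    · have hres : P.restrict Bᶜ = 0 := Measure.restrict_eq_zero.mpr h0
      simp [h0, hres]
    · haveI : NeZero (P.restrict Bᶜ) :=
        ⟨fun h => h0 (Measure.restrict_eq_zero.mp h)⟩
      have hJ := hφ.map_average_le (μ := P.restrict Bᶜ) hφc.continuousOn isClosed_univ
        (Filter.Eventually.of_forall fun _ => Set.mem_univ _)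
        hZint.restrict hφZint.restrict
      rw [average_eq, hintBc, smul_zero, average_eq, measureReal_restrict_apply_univ, measureReal_def,
        smul_eq_mul] at hJ
      have hpos : 0 < (P Bᶜ).toReal := ENNReal.toReal_pos h0 (measure_ne_top _ _)
      calc (P Bᶜ).toReal * φ 0
          ≤ (P Bᶜ).toReal * ((P Bᶜ).toReal⁻¹ * ∫ ω in Bᶜ, φ (Z ω) ∂P) :=
            mul_le_mul_of_nonneg_left hJ hpos.le
        _ = ∫ ω in Bᶜ, φ (Z ω) ∂P := by field_simp
  linarith

end
end

section
/- Let Z be an integrable ℝ^q-valued random vector, and for i = 1,…,q let Z_{−i} denote the vector obtained from Z by removing the i-th coordinate. Assume the vanishing conditional expectations property: E(Z_i | Z_{−i}) = 0 a.s. for each i = 1,…,q. Then for all real numbers with 0 ≤ λ_i ≤ ℓ_i (i = 1,…,q), Diag(λ_1,…,λ_q) Z ≤_cvx Diag(ℓ_1,…,ℓ_q) Z, where Diag(λ_1,…,λ_q) is the q×q diagonal matrix with diagonal entries λ_1,…,λ_q. -/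
open MeasureTheory ProbabilityTheory
open scoped ENNReal

noncomputable section

section Aux

lemma cvxLE_trans {Ω F : Type*} [MeasurableSpace Ω] [NormedAddCommGroup F] [NormedSpace ℝ F]
    {P : Measure Ω} {X Y Z : Ω → F} (h1 : cvxLE P X Y) (h2 : cvxLE P Y Z) : cvxLE P X Z :=
  fun φ hφ hg => (h1 φ hφ hg).trans (h2 φ hφ hg)

lemma cvxLE_refl {Ω F : Type*} [MeasurableSpace Ω] [NormedAddCommGroup F] [NormedSpace ℝ F]
    (P : Measure Ω) (X : Ω → F) : cvxLE P X X := fun _ _ _ => le_rfl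

lemma abs_apply_le_norm {q : ℕ} (x : Euc q) (j : Fin q) : |x j| ≤ ‖x‖ := by
  rw [EuclideanSpace.norm_eq]
  rw [show |x j| = Real.sqrt (‖x j‖ ^ 2) by
    rw [Real.sqrt_sq (norm_nonneg _), Real.norm_eq_abs]]
  apply Real.sqrt_le_sqrt
  exact Finset.single_le_sum (f := fun k => ‖x k‖ ^ 2) (fun k _ => sq_nonneg _)
    (Finset.mem_univ j)

lemma euc_norm_le {q : ℕ} (v : Euc q) (B : ℝ) (hB0 : 0 ≤ B) (hB : ∀ k, |v k| ≤ B) :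
    ‖v‖ ≤ Real.sqrt q * B := by
  rw [EuclideanSpace.norm_eq]
  have h1 : ∑ i, ‖v i‖ ^ 2 ≤ ∑ _i : Fin q, B ^ 2 := by
    refine Finset.sum_le_sum fun k _ => ?_
    rw [Real.norm_eq_abs]
    exact pow_le_pow_left₀ (abs_nonneg _) (hB k) 2
  refine (Real.sqrt_le_sqrt h1).trans ?_
  rw [Finset.sum_const, Finset.card_univ, Fintype.card_fin, nsmul_eq_mul,
    Real.sqrt_mul (by positivity), Real.sqrt_sq hB0]

lemma cvxLE_toLp {Ω : Type*} [MeasurableSpace Ω] (P : Measure Ω) (q : ℕ)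
    (X Y : Ω → Fin q → ℝ) (h : cvxLE P X Y) :
    cvxLE P (fun ω => (WithLp.toLp 2 (X ω) : Euc q)) (fun ω => (WithLp.toLp 2 (Y ω) : Euc q)) := by
  intro φ hφ hgr
  obtain ⟨C, hC⟩ := hgr
  have hC0 : 0 ≤ C := by
    have h := hC 0
    simp only [norm_zero] at h
    nlinarith [abs_nonneg (φ 0)]
  refine h (fun x => φ (WithLp.toLp 2 x : Euc q)) ?_ ?_
  · refine ⟨convex_univ, fun x _ y _ a b ha hb hab => ?_⟩
    have h2 := hφ.2 (Set.mem_univ (WithLp.toLp 2 x : Euc q)) (Set.mem_univ (WithLp.toLp 2 y : Euc q))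
      ha hb hab
    have e : (WithLp.toLp 2 (a • x + b • y) : Euc q)
        = a • (WithLp.toLp 2 x : Euc q) + b • (WithLp.toLp 2 y : Euc q) := rfl
    simp only
    rw [e]
    exact h2
  · refine ⟨C * (1 + Real.sqrt q), fun x => ?_⟩
    have hn : ‖(WithLp.toLp 2 x : Euc q)‖ ≤ Real.sqrt q * ‖x‖ :=
      euc_norm_le _ ‖x‖ (norm_nonneg _) (fun k => by
        have := norm_le_pi_norm x k
        rw [Real.norm_eq_abs] at this
        exact this)
    have hs : 0 ≤ Real.sqrt q := Real.sqrt_nonneg _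
    have hx : 0 ≤ ‖x‖ := norm_nonneg _
    refine (hC _).trans ?_
    nlinarith [mul_nonneg hC0 hs, mul_nonneg hC0 hx, mul_nonneg (mul_nonneg hC0 hs) hx,
      mul_le_mul_of_nonneg_left hn hC0]

end Aux

section Core

/-- Core one-dimensional lemma: if `E(Y | σ(W)) = 0` then `E ψ(W, 0) ≤ E ψ(W, Y)` for convex
`ψ` with linear growth. -/
lemma core_lemma {Ω : Type*} [mΩ : MeasurableSpace Ω] (P : Measure Ω) [IsProbabilityMeasure P]
    {ι : Type*} [Fintype ι] {W : Ω → (ι → ℝ)} {Y : Ω → ℝ}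
    (hW : Measurable W) (hY : Measurable Y)
    (hWint : Integrable W P) (hYint : Integrable Y P)
    (hcond : P[Y | MeasurableSpace.comap W inferInstance] =ᵐ[P] (0 : Ω → ℝ))
    {ψ : ((ι → ℝ) × ℝ) → ℝ} (hψ : ConvexOn ℝ Set.univ ψ)
    (hgrowth : ∃ C : ℝ, ∀ x, |ψ x| ≤ C * (1 + ‖x‖)) :
    ∫ ω, ψ (W ω, 0) ∂P ≤ ∫ ω, ψ (W ω, Y ω) ∂P := by
  obtain ⟨C, hC⟩ := hgrowth
  have hC0 : 0 ≤ C := by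
    have h := hC 0
    simp only [norm_zero] at h
    nlinarith [abs_nonneg (ψ 0)]
  have hψc : Continuous ψ := by
    rw [← continuousOn_univ]
    exact hψ.continuousOn isOpen_univ
  have hbound : ∀ (w : ι → ℝ) (y : ℝ), |ψ (w, y)| ≤ C * (1 + ‖w‖ + |y|) := by
    intro w y
    refine (hC (w, y)).trans ?_
    have h : ‖((w, y) : (ι → ℝ) × ℝ)‖ ≤ ‖w‖ + |y| := by
      rw [Prod.norm_def]
      exact max_le (le_add_of_nonneg_right (abs_nonneg _))
        (by rw [Real.norm_eq_abs]; exact le_add_of_nonneg_left (norm_nonneg _))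
    nlinarith
  have hgint : Integrable (fun ω => C * (1 + ‖W ω‖ + |Y ω|)) P :=
    (((integrable_const 1).add hWint.norm).add hYint.abs).const_mul C
  have hint1 : Integrable (fun ω => ψ (W ω, Y ω)) P := by
    refine Integrable.mono' hgint ((hψc.measurable.comp (hW.prodMk hY)).aestronglyMeasurable) ?_
    exact Filter.Eventually.of_forall fun ω => by
      rw [Real.norm_eq_abs]; exact hbound _ _
  have hint0 : Integrable (fun ω => ψ (W ω, 0)) P := by
    refine Integrable.mono' hgint
      ((hψc.measurable.comp (hW.prodMk measurable_const)).aestronglyMeasurable) ?_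
    refine Filter.Eventually.of_forall fun ω => ?_
    rw [Real.norm_eq_abs]
    refine le_trans (by simpa using hbound (W ω) 0) ?_
    nlinarith [abs_nonneg (Y ω)]
  set κ := condDistrib Y W P with hκ
  -- conditional mean is 0
  have hmean : (fun ω => ∫ y, y ∂(κ (W ω))) =ᵐ[P] (fun _ => (0 : ℝ)) :=
    (condExp_ae_eq_integral_condDistrib' hW hYint).symm.trans hcond
  -- kernel integrability of the identity
  have hmapY : Integrable (fun p : (ι → ℝ) × ℝ => p.2) (P.map fun ω => (W ω, Y ω)) := by
    rw [integrable_map_measure measurable_snd.aestronglyMeasurable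
      ((hW.prodMk hY).aemeasurable)]
    exact hYint
  have hinty : ∀ᵐ ω ∂P, Integrable (fun y => y) (κ (W ω)) :=
    hmapY.condDistrib_ae hW.aemeasurable hY.aemeasurable
  -- kernel integrability of ψ(w, ·)
  have hmapψ : Integrable ψ (P.map fun ω => (W ω, Y ω)) := by
    rw [integrable_map_measure hψc.aestronglyMeasurable ((hW.prodMk hY).aemeasurable)]
    exact hint1
  have hintψ : ∀ᵐ ω ∂P, Integrable (fun y => ψ (W ω, y)) (κ (W ω)) :=
    hmapψ.condDistrib_ae hW.aemeasurable hY.aemeasurable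
  -- conditional expectation of ψ(W, Y)
  have hcond2 : P[fun ω => ψ (W ω, Y ω) | MeasurableSpace.comap W inferInstance]
      =ᵐ[P] fun ω => ∫ y, ψ (W ω, y) ∂(κ (W ω)) :=
    condExp_prod_ae_eq_integral_condDistrib hW hY.aemeasurable hψc.stronglyMeasurable hint1
  -- pointwise Jensen
  have hjensen : ∀ᵐ ω ∂P, ψ (W ω, 0) ≤ ∫ y, ψ (W ω, y) ∂(κ (W ω)) := by
    filter_upwards [hmean, hinty, hintψ] with ω h0 h1 h2
    have hconv : ConvexOn ℝ Set.univ (fun y : ℝ => ψ (W ω, y)) := by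
      refine ⟨convex_univ, fun x _ y _ a b ha hb hab => ?_⟩
      have hxy : ((W ω, a • x + b • y) : (ι → ℝ) × ℝ)
          = a • ((W ω, x) : (ι → ℝ) × ℝ) + b • ((W ω, y) : (ι → ℝ) × ℝ) := by
        ext
        · simp only [Prod.smul_fst, Prod.fst_add, Prod.smul_snd, Prod.snd_add]
          rw [← add_smul, hab, one_smul]
        · simp
      have h := hψ.2 (Set.mem_univ ((W ω, x) : (ι → ℝ) × ℝ))
        (Set.mem_univ ((W ω, y) : (ι → ℝ) × ℝ)) ha hb hab
      rw [← hxy] at h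
      simpa using h
    have hcont : ContinuousOn (fun y : ℝ => ψ (W ω, y)) Set.univ :=
      (hψc.comp (Continuous.prodMk_right (W ω))).continuousOn
    have hj := hconv.map_integral_le (μ := κ (W ω)) (f := fun y : ℝ => y) hcont isClosed_univ
      (Filter.Eventually.of_forall fun _ => Set.mem_univ _) h1 h2
    rw [h0] at hj
    exact hj
  have hrhsint : Integrable (fun ω => ∫ y, ψ (W ω, y) ∂(κ (W ω))) P :=
    integrable_condExp.congr hcond2
  calc ∫ ω, ψ (W ω, 0) ∂P ≤ ∫ ω, ∫ y, ψ (W ω, y) ∂(κ (W ω)) ∂P :=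
        integral_mono_ae hint0 hrhsint hjensen
    _ = ∫ ω, (P[fun ω => ψ (W ω, Y ω) | MeasurableSpace.comap W inferInstance]) ω ∂P :=
        (integral_congr_ae hcond2).symm
    _ = ∫ ω, ψ (W ω, Y ω) ∂P := by
        haveI : SigmaFinite (P.trim hW.comap_le) := by infer_instance
        exact integral_condExp hW.comap_le

end Core

section Step

variable {Ω : Type*} [mΩ : MeasurableSpace Ω]

lemma step_lemma (P : Measure Ω) [IsProbabilityMeasure P] (q : ℕ) (Z : Ω → Euc q)
    (hZm : Measurable Z) (hZint : Integrable Z P) (i : Fin q)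
    (hv : P[(fun ω => Z ω i) |
        MeasurableSpace.comap (fun ω => (fun j : {j : Fin q // j ≠ i} => Z ω j.1))
          inferInstance] =ᵐ[P] (0 : Ω → ℝ))
    (c c' : Fin q → ℝ) (hcc' : ∀ k, k ≠ i → c k = c' k)
    (h0 : 0 ≤ c i) (h1 : c i ≤ c' i) :
    cvxLE P (fun ω => (fun k => c k * Z ω k : Fin q → ℝ))
      (fun ω => (fun k => c' k * Z ω k : Fin q → ℝ)) := by
  have hZk : ∀ k : Fin q, Measurable (fun ω => Z ω k) :=
    fun k => ((EuclideanSpace.proj k : Euc q →L[ℝ] ℝ).continuous.measurable).comp hZm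
  have hvecm : ∀ e : Fin q → ℝ, Measurable (fun ω => (fun k => e k * Z ω k : Fin q → ℝ)) :=
    fun e => measurable_pi_lambda _ fun k => (hZk k).const_mul (e k)
  intro φ hφ hgr
  have hφc : Continuous φ := by
    rw [← continuousOn_univ]
    exact hφ.continuousOn isOpen_univ
  obtain ⟨C, hC⟩ := hgr
  have hC0 : 0 ≤ C := by
    have h := hC 0
    simp only [norm_zero] at h
    nlinarith [abs_nonneg (φ 0)]
  -- integrability of φ applied to coefficient-scaled vectors
  have intAux : ∀ e : Fin q → ℝ,
      Integrable (fun ω => φ ((fun k => e k * Z ω k : Fin q → ℝ))) P := by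
    intro e
    set M := ∑ j, |e j| with hM
    have hM0 : 0 ≤ M := Finset.sum_nonneg fun j _ => abs_nonneg _
    have hMk : ∀ k, |e k| ≤ M := fun k =>
      Finset.single_le_sum (f := fun j => |e j|) (fun j _ => abs_nonneg _) (Finset.mem_univ k)
    refine Integrable.mono' (g := fun ω => C * (1 + M * ‖Z ω‖))
      (((integrable_const 1).add (hZint.norm.const_mul M)).const_mul C)
      ((hφc.measurable.comp (hvecm e)).aestronglyMeasurable) ?_
    refine Filter.Eventually.of_forall fun ω => ?_
    rw [Real.norm_eq_abs]
    refine (hC _).trans (mul_le_mul_of_nonneg_left (add_le_add_right ?_ 1) hC0)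
    refine (pi_norm_le_iff_of_nonneg (mul_nonneg hM0 (norm_nonneg _))).mpr fun k => ?_
    rw [Real.norm_eq_abs, abs_mul]
    exact mul_le_mul (hMk k) (abs_apply_le_norm _ k) (abs_nonneg _) hM0
  by_cases hb : c' i = 0
  · -- then c i = 0 and the two vectors agree
    refine le_of_eq (integral_congr_ae (Filter.Eventually.of_forall fun ω => ?_))
    show φ (fun k => c k * Z ω k) = φ (fun k => c' k * Z ω k)
    congr 1
    funext k
    by_cases hk : k = i
    · subst hk
      have hc : c k = 0 := le_antisymm (h1.trans_eq hb) h0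
      rw [hc, hb]
    · rw [hcc' k hk]
  · have hbpos : 0 < c' i := lt_of_le_of_ne (h0.trans h1) (Ne.symm hb)
    set t := c i / c' i with htdef
    have ht0 : 0 ≤ t := div_nonneg h0 hbpos.le
    have ht1 : t ≤ 1 := (div_le_one hbpos).mpr h1
    set c0 : Fin q → ℝ := fun k => if k = i then 0 else c k with hc0def
    have hdecomp : ∀ ω, (fun k => c k * Z ω k : Fin q → ℝ)
        = t • (fun k => c' k * Z ω k : Fin q → ℝ)
          + (1 - t) • (fun k => c0 k * Z ω k : Fin q → ℝ) := by
      intro ω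
      funext k
      simp only [Pi.add_apply, Pi.smul_apply, smul_eq_mul]
      by_cases hk : k = i
      · subst hk
        simp only [hc0def, if_pos rfl]
        have h2 : t * c' k = c k := div_mul_cancel₀ _ hb
        rw [zero_mul, mul_zero, add_zero, ← mul_assoc, h2]
      · simp only [hc0def, if_neg hk, hcc' k hk]
        ring
    have hptwise : ∀ ω, φ ((fun k => c k * Z ω k : Fin q → ℝ))
        ≤ t * φ ((fun k => c' k * Z ω k : Fin q → ℝ))
          + (1 - t) * φ ((fun k => c0 k * Z ω k : Fin q → ℝ)) := by
      intro ω
      have h : φ (t • (fun k => c' k * Z ω k : Fin q → ℝ)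
            + (1 - t) • (fun k => c0 k * Z ω k : Fin q → ℝ))
          ≤ t • φ ((fun k => c' k * Z ω k : Fin q → ℝ))
            + (1 - t) • φ ((fun k => c0 k * Z ω k : Fin q → ℝ)) :=
        hφ.2 (Set.mem_univ _) (Set.mem_univ _) ht0 (by linarith) (by ring)
      rw [← hdecomp ω] at h
      simpa using h
    have ib := intAux c'
    have i0 := intAux c0
    have ic := intAux c
    -- core inequality
    have hcore : ∫ ω, φ ((fun k => c0 k * Z ω k : Fin q → ℝ)) ∂P
        ≤ ∫ ω, φ ((fun k => c' k * Z ω k : Fin q → ℝ)) ∂P := by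
      have hWm : Measurable (fun ω => (fun j : {j : Fin q // j ≠ i} => Z ω j.1)) :=
        measurable_pi_lambda _ fun j => hZk j.1
      have hWint : Integrable (fun ω => (fun j : {j : Fin q // j ≠ i} => Z ω j.1)) P := by
        refine Integrable.mono' hZint.norm hWm.aestronglyMeasurable
          (Filter.Eventually.of_forall fun ω => ?_)
        refine (pi_norm_le_iff_of_nonneg (norm_nonneg _)).mpr fun j => ?_
        rw [Real.norm_eq_abs]
        exact abs_apply_le_norm _ j.1
      have hYm : Measurable (fun ω => Z ω i) := hZk i
      have hYint : Integrable (fun ω => Z ω i) P := by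
        refine Integrable.mono' hZint.norm hYm.aestronglyMeasurable
          (Filter.Eventually.of_forall fun ω => ?_)
        rw [Real.norm_eq_abs]
        exact abs_apply_le_norm _ i
      set ψ : (({j : Fin q // j ≠ i} → ℝ) × ℝ) → ℝ := fun p =>
        φ ((fun k => if h : k = i then c' i * p.2 else c k * p.1 ⟨k, h⟩ : Fin q → ℝ)) with hψdef
      have hlin : ∀ (a b : ℝ) (x y : ({j : Fin q // j ≠ i} → ℝ) × ℝ),
          (fun k => if h : k = i then c' i * (a • x + b • y).2
            else c k * (a • x + b • y).1 ⟨k, h⟩ : Fin q → ℝ)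
          = a • (fun k => if h : k = i then c' i * x.2 else c k * x.1 ⟨k, h⟩ : Fin q → ℝ)
            + b • (fun k => if h : k = i then c' i * y.2 else c k * y.1 ⟨k, h⟩ : Fin q → ℝ) := by
        intro a b x y
        funext k
        simp only [Pi.add_apply, Pi.smul_apply, smul_eq_mul, Prod.smul_snd, Prod.snd_add,
          Prod.smul_fst, Prod.fst_add]
        split_ifs with h
        · ring
        · ring
      have hψconv : ConvexOn ℝ Set.univ ψ := by
        refine ⟨convex_univ, fun x _ y _ a b ha hb hab => ?_⟩
        have h := hφ.2
          (Set.mem_univ ((fun k => if h : k = i then c' i * x.2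
            else c k * x.1 ⟨k, h⟩ : Fin q → ℝ)))
          (Set.mem_univ ((fun k => if h : k = i then c' i * y.2
            else c k * y.1 ⟨k, h⟩ : Fin q → ℝ)))
          ha hb hab
        simp only [hψdef]
        rw [hlin a b x y]
        simpa using h
      have hψgr : ∃ C' : ℝ, ∀ p : (({j : Fin q // j ≠ i} → ℝ) × ℝ),
          |ψ p| ≤ C' * (1 + ‖p‖) := by
        set M := |c' i| + ∑ k, |c k| with hMdef
        have hM0 : 0 ≤ M := by positivity
        have hMb : |c' i| ≤ M := le_add_of_nonneg_right (by positivity)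
        have hMk : ∀ k, |c k| ≤ M := by
          intro k
          have h := Finset.single_le_sum (f := fun j => |c j|) (fun j _ => abs_nonneg _)
            (Finset.mem_univ k)
          have := abs_nonneg (c' i)
          rw [hMdef]
          linarith
        refine ⟨C * (1 + M), fun p => ?_⟩
        calc |ψ p| ≤ C * (1 + ‖(fun k => if h : k = i then c' i * p.2
              else c k * p.1 ⟨k, h⟩ : Fin q → ℝ)‖) := hC _
          _ ≤ C * (1 + M * ‖p‖) := by
              refine mul_le_mul_of_nonneg_left (add_le_add_right ?_ 1) hC0
              refine (pi_norm_le_iff_of_nonneg (mul_nonneg hM0 (norm_nonneg _))).mpr fun k => ?_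
              rw [Real.norm_eq_abs]
              by_cases h : k = i
              · rw [dif_pos h, abs_mul]
                have h2 : |p.2| ≤ ‖p‖ := by
                  rw [← Real.norm_eq_abs]; exact norm_snd_le p
                exact mul_le_mul hMb h2 (abs_nonneg _) hM0
              · rw [dif_neg h, abs_mul]
                have h2 : |p.1 ⟨k, h⟩| ≤ ‖p‖ := by
                  rw [← Real.norm_eq_abs]
                  exact (norm_le_pi_norm p.1 ⟨k, h⟩).trans (norm_fst_le p)
                exact mul_le_mul (hMk k) h2 (abs_nonneg _) hM0
          _ ≤ C * (1 + M) * (1 + ‖p‖) := by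
              have hp0 : 0 ≤ ‖p‖ := norm_nonneg p
              nlinarith
      have h := core_lemma P hWm hYm hWint hYint hv hψconv hψgr
      have e0 : ∀ ω, ψ ((fun j : {j : Fin q // j ≠ i} => Z ω j.1), 0)
          = φ ((fun k => c0 k * Z ω k : Fin q → ℝ)) := by
        intro ω
        simp only [hψdef]
        congr 1
        funext k
        by_cases h : k = i
        · rw [dif_pos h]
          simp only [hc0def, if_pos h, mul_zero, zero_mul]
        · rw [dif_neg h]
          simp only [hc0def, if_neg h]
      have eb : ∀ ω, ψ ((fun j : {j : Fin q // j ≠ i} => Z ω j.1), Z ω i)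
          = φ ((fun k => c' k * Z ω k : Fin q → ℝ)) := by
        intro ω
        simp only [hψdef]
        congr 1
        funext k
        by_cases h : k = i
        · subst h; rw [dif_pos rfl]
        · rw [dif_neg h, hcc' k h]
      calc ∫ ω, φ ((fun k => c0 k * Z ω k : Fin q → ℝ)) ∂P
          = ∫ ω, ψ ((fun j : {j : Fin q // j ≠ i} => Z ω j.1), 0) ∂P :=
            integral_congr_ae (Filter.Eventually.of_forall fun ω => (e0 ω).symm)
        _ ≤ ∫ ω, ψ ((fun j : {j : Fin q // j ≠ i} => Z ω j.1), Z ω i) ∂P := h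
        _ = ∫ ω, φ ((fun k => c' k * Z ω k : Fin q → ℝ)) ∂P :=
            integral_congr_ae (Filter.Eventually.of_forall fun ω => eb ω)
    calc ∫ ω, φ ((fun k => c k * Z ω k : Fin q → ℝ)) ∂P
        ≤ ∫ ω, (t * φ ((fun k => c' k * Z ω k : Fin q → ℝ))
            + (1 - t) * φ ((fun k => c0 k * Z ω k : Fin q → ℝ))) ∂P :=
          integral_mono_ae ic ((ib.const_mul t).add (i0.const_mul (1 - t)))
            (Filter.Eventually.of_forall hptwise)
      _ = t * ∫ ω, φ ((fun k => c' k * Z ω k : Fin q → ℝ)) ∂P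
          + (1 - t) * ∫ ω, φ ((fun k => c0 k * Z ω k : Fin q → ℝ)) ∂P := by
          rw [integral_add (ib.const_mul t) (i0.const_mul (1 - t)),
            integral_const_mul, integral_const_mul]
      _ ≤ t * ∫ ω, φ ((fun k => c' k * Z ω k : Fin q → ℝ)) ∂P
          + (1 - t) * ∫ ω, φ ((fun k => c' k * Z ω k : Fin q → ℝ)) ∂P := by
          have h1t : 0 ≤ 1 - t := by linarith
          nlinarith [hcore]
      _ = ∫ ω, φ ((fun k => c' k * Z ω k : Fin q → ℝ)) ∂P := by ring

end Step

/-- If `E(Z_i | Z_{-i}) = 0` a.s. for each coordinate `i` (vanishing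
conditional expectations) and `0 ≤ λ_i ≤ ℓ_i`, then
`Diag(λ₁,…,λ_q) Z ≤_cvx Diag(ℓ₁,…,ℓ_q) Z`. -/
theorem stmt12 {Ω : Type*} [mΩ : MeasurableSpace Ω] (P : Measure Ω) [IsProbabilityMeasure P]
    (q : ℕ) (Z : Ω → Euc q)
    (hZm : Measurable Z) (hZint : Integrable Z P)
    (hvanish : ∀ i : Fin q,
      P[(fun ω => Z ω i) |
          MeasurableSpace.comap (fun ω => (fun j : {j : Fin q // j ≠ i} => Z ω j.1))
            inferInstance]
        =ᵐ[P] (0 : Ω → ℝ))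
    (lam ell : Fin q → ℝ) (hle : ∀ i, 0 ≤ lam i ∧ lam i ≤ ell i) :
    cvxLE P (fun ω => (WithLp.toLp 2 (fun i => lam i * Z ω i) : Euc q))
      (fun ω => (WithLp.toLp 2 (fun i => ell i * Z ω i) : Euc q)) := by
  classical
  have key : ∀ n : ℕ, n ≤ q →
      cvxLE P (fun ω => (fun i => lam i * Z ω i : Fin q → ℝ))
        (fun ω => (fun i => (if (i : ℕ) < n then ell i else lam i) * Z ω i : Fin q → ℝ)) := by
    intro n
    induction n with
    | zero =>
        intro _
        have he : (fun ω => (fun i => (if (i : ℕ) < 0 then ell i else lam i) * Z ω i : Fin q → ℝ))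
            = fun ω => (fun i => lam i * Z ω i : Fin q → ℝ) := by
          funext ω
          funext k
          simp
        rw [he]
        exact cvxLE_refl P _
    | succ n ih =>
        intro hn
        have hn' : n < q := hn
        refine cvxLE_trans (ih (Nat.le_of_succ_le hn)) ?_
        have hstep := step_lemma P q Z hZm hZint ⟨n, hn'⟩ (hvanish ⟨n, hn'⟩)
          (fun k => if (k : ℕ) < n then ell k else lam k)
          (fun k => if (k : ℕ) < n + 1 then ell k else lam k)
          (fun k hk => by
            have hne : (k : ℕ) ≠ n := fun h => hk (Fin.ext h)
            by_cases h : (k : ℕ) < n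
            · simp [h, Nat.lt_succ_of_lt h]
            · have h2 : ¬ (k : ℕ) < n + 1 := by omega
              simp [h, h2])
          (by simp; exact (hle _).1)
          (by simp [Nat.lt_irrefl, Nat.lt_succ_self]; exact (hle _).2)
        exact hstep
  have h := key q le_rfl
  have he : (fun ω => (fun i => (if (i : ℕ) < q then ell i else lam i) * Z ω i : Fin q → ℝ))
      = fun ω => (fun i => ell i * Z ω i : Fin q → ℝ) := by
    funext ω
    funext k
    simp [k.isLt]
  rw [he] at h
  exact cvxLE_toLp P q _ _ h

end
end

section
/- Let Z be an integrable ℝ^q-valued random vector, and for i = 1,…,q let Z_{−i} denote the vector obtained from Z by removing the i-th coordinate. Assume the symmetric conditional laws property: for each i = 1,…,q, the conditional laws of Z_i and −Z_i given Z_{−i} coincide a.s. Then for all real numbers with |λ_i| ≤ |ℓ_i| (i = 1,…,q), Diag(λ_1,…,λ_q) Z ≤_cvx Diag(ℓ_1,…,ℓ_q) Z. -/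
open MeasureTheory ProbabilityTheory
open scoped ENNReal

noncomputable section

namespace Stmt13Aux

lemma coord_le_norm {q : ℕ} (x : Euc q) (i : Fin q) : |x i| ≤ ‖x‖ := by
  rw [EuclideanSpace.norm_eq]
  calc |x i| = Real.sqrt (‖x i‖ ^ 2) := by
        rw [Real.sqrt_sq_eq_abs, Real.norm_eq_abs, abs_abs]
    _ ≤ Real.sqrt (∑ j, ‖x j‖ ^ 2) :=
        Real.sqrt_le_sqrt (Finset.single_le_sum (f := fun j => ‖x j‖ ^ 2)
          (fun j _ => by positivity) (Finset.mem_univ i))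

variable {Ω : Type*} [mΩ : MeasurableSpace Ω] (P : Measure Ω) [IsProbabilityMeasure P]
  {q : ℕ} (Z : Ω → Euc q)

/-- The scaled vector, valued in the plain pi type. -/
def V (c : Fin q → ℝ) (ω : Ω) : Fin q → ℝ := fun i => c i * Z ω i

omit [IsProbabilityMeasure P] in
lemma V_meas (hZm : Measurable Z) (c : Fin q → ℝ) : Measurable (V Z c) :=
  measurable_pi_lambda _ fun i => ((measurable_pi_apply i).comp ((WithLp.measurable_ofLp 2 _).comp hZm)).const_mul _

omit mΩ in
lemma norm_V_le (c : Fin q → ℝ) (M : ℝ) (hM : ∀ i, |c i| ≤ M) (hM0 : 0 ≤ M) (ω : Ω) :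
    ‖V Z c ω‖ ≤ M * ‖Z ω‖ := by
  have hZn : (0:ℝ) ≤ ‖Z ω‖ := norm_nonneg _
  apply pi_norm_le_iff_of_nonneg (by positivity) |>.mpr
  intro i
  calc ‖V Z c ω i‖ = |c i| * |Z ω i| := by
        rw [Real.norm_eq_abs]; exact abs_mul _ _
    _ ≤ M * ‖Z ω‖ :=
        mul_le_mul (hM i) (coord_le_norm _ i) (abs_nonneg _) hM0

lemma intV (hZm : Measurable Z) (hZint : Integrable Z P)
    (φ : (Fin q → ℝ) → ℝ) (hφc : Continuous φ) (C : ℝ) (hC : ∀ x, |φ x| ≤ C * (1 + ‖x‖))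
    (c : Fin q → ℝ) : Integrable (fun ω => φ (V Z c ω)) P := by
  have hC0 : 0 ≤ C := by
    have := hC 0
    have h0 : (0:ℝ) ≤ |φ 0| := abs_nonneg _
    nlinarith [norm_nonneg (0 : Fin q → ℝ)]
  set M : ℝ := 1 + ∑ i, |c i| with hMdef
  have hM0 : 0 ≤ M := by positivity
  have hM : ∀ i, |c i| ≤ M := fun i => by
    have h1 : |c i| ≤ ∑ j, |c j| :=
      Finset.single_le_sum (f := fun j => |c j|) (fun j _ => abs_nonneg _) (Finset.mem_univ i)
    linarith
  apply Integrable.mono' (g := fun ω => C * (1 + M * ‖Z ω‖))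
  · exact (((integrable_const (1:ℝ)).add (hZint.norm.const_mul M)).const_mul C)
  · exact (hφc.measurable.comp (V_meas Z hZm c)).aestronglyMeasurable
  · filter_upwards with ω
    have h1 : |φ (V Z c ω)| ≤ C * (1 + ‖V Z c ω‖) := hC _
    have h2 : ‖V Z c ω‖ ≤ M * ‖Z ω‖ := norm_V_le Z c M hM hM0 ω
    calc ‖φ (V Z c ω)‖ = |φ (V Z c ω)| := rfl
      _ ≤ C * (1 + ‖V Z c ω‖) := h1
      _ ≤ C * (1 + M * ‖Z ω‖) := by nlinarith

omit [IsProbabilityMeasure P] in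
/-- Sign flip at a coordinate does not change the expectation, by the symmetry hypothesis. -/
lemma sym (hZm : Measurable Z) (i : Fin q)
    (hsym : P.map (fun ω => ((Z ω i : ℝ), (fun j : {j : Fin q // j ≠ i} => Z ω j.1)))
        = P.map (fun ω => (-(Z ω i), (fun j : {j : Fin q // j ≠ i} => Z ω j.1))))
    (φ : (Fin q → ℝ) → ℝ) (hφc : Continuous φ) (c : Fin q → ℝ) :
    ∫ ω, φ (V Z c ω) ∂P = ∫ ω, φ (V Z (fun j => if j = i then -c j else c j) ω) ∂P := by
  set g : ℝ × ({j : Fin q // j ≠ i} → ℝ) → (Fin q → ℝ) :=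
    fun p => (fun j => if h : j = i then c i * p.1 else c j * p.2 ⟨j, h⟩) with hg
  have hgm : Measurable g := by
    apply measurable_pi_lambda
    intro j
    by_cases h : j = i
    · simp only [hg, dif_pos h]
      exact measurable_fst.const_mul _
    · simp only [hg, dif_neg h]
      exact ((measurable_pi_apply (⟨j, h⟩ : {j : Fin q // j ≠ i})).comp measurable_snd).const_mul _
  have hpair1 : Measurable (fun ω => ((Z ω i : ℝ), (fun j : {j : Fin q // j ≠ i} => Z ω j.1))) :=
    Measurable.prod ((measurable_pi_apply i).comp ((WithLp.measurable_ofLp 2 _).comp hZm))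
      (measurable_pi_lambda _ fun j => (measurable_pi_apply j.1).comp ((WithLp.measurable_ofLp 2 _).comp hZm))
  have hpair2 : Measurable (fun ω => (-(Z ω i), (fun j : {j : Fin q // j ≠ i} => Z ω j.1))) :=
    Measurable.prod (((measurable_pi_apply i).comp ((WithLp.measurable_ofLp 2 _).comp hZm)).neg)
      (measurable_pi_lambda _ fun j => (measurable_pi_apply j.1).comp ((WithLp.measurable_ofLp 2 _).comp hZm))
  have key1 : ∀ ω, g ((Z ω i : ℝ), (fun j : {j : Fin q // j ≠ i} => Z ω j.1)) = V Z c ω := by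
    intro ω
    funext j
    by_cases h : j = i
    · subst h; simp [hg, V]
    · simp [hg, dif_neg h, V]
  have key2 : ∀ ω, g (-(Z ω i), (fun j : {j : Fin q // j ≠ i} => Z ω j.1))
      = V Z (fun j => if j = i then -c j else c j) ω := by
    intro ω
    funext j
    by_cases h : j = i
    · subst h; simp only [hg, V]; simp only [dite_true, if_true]; ring
    · simp only [hg, dif_neg h, V, if_neg h]
  have hφg1 : AEStronglyMeasurable (fun p => φ (g p))
      (P.map (fun ω => ((Z ω i : ℝ), (fun j : {j : Fin q // j ≠ i} => Z ω j.1)))) :=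
    (hφc.measurable.comp hgm).aestronglyMeasurable
  have hφg2 : AEStronglyMeasurable (fun p => φ (g p))
      (P.map (fun ω => (-(Z ω i), (fun j : {j : Fin q // j ≠ i} => Z ω j.1)))) :=
    (hφc.measurable.comp hgm).aestronglyMeasurable
  calc ∫ ω, φ (V Z c ω) ∂P
      = ∫ ω, φ (g ((Z ω i : ℝ), (fun j : {j : Fin q // j ≠ i} => Z ω j.1))) ∂P := by
        simp_rw [key1]
    _ = ∫ p, φ (g p) ∂(P.map (fun ω => ((Z ω i : ℝ), (fun j : {j : Fin q // j ≠ i} => Z ω j.1)))) := by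
        rw [integral_map hpair1.aemeasurable hφg1]
    _ = ∫ p, φ (g p) ∂(P.map (fun ω => (-(Z ω i), (fun j : {j : Fin q // j ≠ i} => Z ω j.1)))) := by
        rw [hsym]
    _ = ∫ ω, φ (g (-(Z ω i), (fun j : {j : Fin q // j ≠ i} => Z ω j.1))) ∂P := by
        rw [integral_map hpair2.aemeasurable hφg2]
    _ = ∫ ω, φ (V Z (fun j => if j = i then -c j else c j) ω) ∂P := by
        simp_rw [key2]

/-- The single-coordinate step. -/
lemma step (hZm : Measurable Z) (hZint : Integrable Z P) (i : Fin q)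
    (hsym : P.map (fun ω => ((Z ω i : ℝ), (fun j : {j : Fin q // j ≠ i} => Z ω j.1)))
        = P.map (fun ω => (-(Z ω i), (fun j : {j : Fin q // j ≠ i} => Z ω j.1))))
    (φ : (Fin q → ℝ) → ℝ) (hφ : ConvexOn ℝ Set.univ φ) (C : ℝ)
    (hC : ∀ x, |φ x| ≤ C * (1 + ‖x‖))
    (c c' : Fin q → ℝ) (hcc : ∀ j, j ≠ i → c j = c' j) (hi : |c i| ≤ |c' i|) :
    ∫ ω, φ (V Z c ω) ∂P ≤ ∫ ω, φ (V Z c' ω) ∂P := by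
  have hφc : Continuous φ := by
    rw [← continuousOn_univ]; exact hφ.continuousOn isOpen_univ
  by_cases h0 : c' i = 0
  · have : c = c' := by
      funext j
      by_cases h : j = i
      · subst h
        have hci : c j = 0 := by
          have h' := hi
          rw [h0] at h'
          simpa using abs_nonpos_iff.mp (by simpa using h')
        rw [hci, h0]
      · exact hcc j h
    rw [this]
  · set t : ℝ := (1 + c i / c' i) / 2 with ht
    have habs : |c i / c' i| ≤ 1 := by
      rw [abs_div, div_le_one (by positivity)]
      exact hi
    have ht0 : 0 ≤ t := by
      have := abs_le.mp habs
      simp only [ht]; linarith [this.1]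
    have ht1 : t ≤ 1 := by
      have := abs_le.mp habs
      simp only [ht]; linarith [this.2]
    set c'' : Fin q → ℝ := fun j => if j = i then -c' j else c' j with hc''
    have hdecomp : ∀ ω, V Z c ω = t • V Z c' ω + (1 - t) • V Z c'' ω := by
      intro ω
      funext j
      show c j * Z ω j = t * (c' j * Z ω j) + (1 - t) * (c'' j * Z ω j)
      by_cases h : j = i
      · subst h
        simp only [hc'', if_pos rfl]
        have hcj : c j = (2 * t - 1) * c' j := by
          simp only [ht]
          field_simp
          ring
        rw [hcj]; ring
      · simp only [hc'', if_neg h, hcc j h]; ring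
    have hint' : Integrable (fun ω => φ (V Z c' ω)) P := intV P Z hZm hZint φ hφc C hC c'
    have hint'' : Integrable (fun ω => φ (V Z c'' ω)) P := intV P Z hZm hZint φ hφc C hC c''
    have hintc : Integrable (fun ω => φ (V Z c ω)) P := intV P Z hZm hZint φ hφc C hC c
    have hptwise : ∀ ω, φ (V Z c ω) ≤ t * φ (V Z c' ω) + (1 - t) * φ (V Z c'' ω) := by
      intro ω
      rw [hdecomp ω]
      exact hφ.2 (Set.mem_univ _) (Set.mem_univ _) ht0 (by linarith) (by ring)
    have hsymeq : ∫ ω, φ (V Z c'' ω) ∂P = ∫ ω, φ (V Z c' ω) ∂P := by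
      rw [sym P Z hZm i hsym φ hφc c']
    calc ∫ ω, φ (V Z c ω) ∂P
        ≤ ∫ ω, (t * φ (V Z c' ω) + (1 - t) * φ (V Z c'' ω)) ∂P :=
          integral_mono hintc ((hint'.const_mul t).add (hint''.const_mul (1 - t)))
            (fun ω => hptwise ω)
      _ = t * ∫ ω, φ (V Z c' ω) ∂P + (1 - t) * ∫ ω, φ (V Z c'' ω) ∂P := by
          rw [integral_add (hint'.const_mul t) (hint''.const_mul (1 - t)),
            integral_const_mul, integral_const_mul]
      _ = ∫ ω, φ (V Z c' ω) ∂P := by rw [hsymeq]; ring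

end Stmt13Aux

/-- If for each coordinate `i` the conditional laws of `Z_i` and `-Z_i`
given `Z_{-i}` coincide (equivalently, `(Z_i, Z_{-i})` and `(-Z_i, Z_{-i})` have the same
joint law) and `|λ_i| ≤ |ℓ_i|`, then `Diag(λ₁,…,λ_q) Z ≤_cvx Diag(ℓ₁,…,ℓ_q) Z`. -/
theorem stmt13 {Ω : Type*} [mΩ : MeasurableSpace Ω] (P : Measure Ω) [IsProbabilityMeasure P]
    (q : ℕ) (Z : Ω → Euc q)
    (hZm : Measurable Z) (hZint : Integrable Z P)
    (hsym : ∀ i : Fin q,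
      P.map (fun ω => ((Z ω i : ℝ), (fun j : {j : Fin q // j ≠ i} => Z ω j.1)))
        = P.map (fun ω => (-(Z ω i), (fun j : {j : Fin q // j ≠ i} => Z ω j.1))))
    (lam ell : Fin q → ℝ) (hle : ∀ i, |lam i| ≤ |ell i|) :
    cvxLE P (fun ω => (WithLp.toLp 2 (fun i => lam i * Z ω i) : Euc q))
      (fun ω => (WithLp.toLp 2 (fun i => ell i * Z ω i) : Euc q)) := by
  intro φ0 hφ0 hCex
  obtain ⟨C0, hC0⟩ := hCex
  set φ : (Fin q → ℝ) → ℝ := fun x => φ0 (WithLp.toLp 2 x) with hφdef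
  have hφ : ConvexOn ℝ Set.univ φ := by
    refine ⟨convex_univ, fun x _ y _ a b ha hb hab => ?_⟩
    have := hφ0.2 (Set.mem_univ (WithLp.toLp 2 x : Euc q)) (Set.mem_univ (WithLp.toLp 2 y : Euc q))
      ha hb hab
    exact this
  have hnorm : ∀ x : Fin q → ℝ, ‖(WithLp.toLp 2 x : Euc q)‖ ≤ (q + 1) * ‖x‖ := by
    intro x
    rw [EuclideanSpace.norm_eq]
    have hq0 : (0:ℝ) ≤ q := Nat.cast_nonneg q
    calc Real.sqrt (∑ j, ‖(WithLp.toLp 2 x : Euc q) j‖ ^ 2)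
        ≤ Real.sqrt (((q + 1) * ‖x‖) ^ 2) := Real.sqrt_le_sqrt (by
          calc ∑ j, ‖(WithLp.toLp 2 x : Euc q) j‖ ^ 2 ≤ ∑ j : Fin q, ‖x‖ ^ 2 :=
                Finset.sum_le_sum fun j _ => by
                  have h1 := norm_le_pi_norm x j
                  have h2 := norm_nonneg (x j)
                  have h3 : ‖x j‖ ^ 2 ≤ ‖x‖ ^ 2 := by nlinarith
                  simpa using h3
            _ = q * ‖x‖ ^ 2 := by simp
            _ ≤ ((q + 1) * ‖x‖) ^ 2 := by
                nlinarith [sq_nonneg ‖x‖, mul_nonneg (mul_nonneg hq0 hq0) (sq_nonneg ‖x‖)])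
      _ = (q + 1) * ‖x‖ := Real.sqrt_sq (by positivity)
  have hC00 : 0 ≤ C0 := by
    have := hC0 0
    have h0 : (0:ℝ) ≤ |φ0 0| := abs_nonneg _
    nlinarith [norm_nonneg (0 : Euc q)]
  set C : ℝ := C0 * (q + 1) with hCdef
  have hC : ∀ x, |φ x| ≤ C * (1 + ‖x‖) := by
    intro x
    have h1 := hC0 (WithLp.toLp 2 x)
    have h2 := hnorm x
    have hq0 : (0:ℝ) ≤ q := Nat.cast_nonneg q
    have hx0 := norm_nonneg x
    show |φ0 (WithLp.toLp 2 x)| ≤ C0 * (q + 1) * (1 + ‖x‖)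
    nlinarith [mul_le_mul_of_nonneg_left h2 hC00, mul_nonneg hC00 hq0]
  set c : ℕ → Fin q → ℝ := fun k i => if (i : ℕ) < k then ell i else lam i with hc
  have hstep : ∀ k, ∫ ω, φ (Stmt13Aux.V Z (c k) ω) ∂P
      ≤ ∫ ω, φ (Stmt13Aux.V Z (c (k+1)) ω) ∂P := by
    intro k
    by_cases hk : k < q
    · set i : Fin q := ⟨k, hk⟩ with hi
      apply Stmt13Aux.step P Z hZm hZint i (hsym i) φ hφ C hC
      · intro j hj
        simp only [hc]
        have hiff : (j : ℕ) < k + 1 ↔ (j : ℕ) < k := by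
          constructor
          · intro h
            rcases Nat.lt_succ_iff_lt_or_eq.mp h with h | h
            · exact h
            · exact absurd (Fin.ext h : j = i) hj
          · exact fun h => Nat.lt_succ_of_lt h
        rw [if_congr hiff rfl rfl]
      · simp only [hc, hi, if_neg (lt_irrefl k), if_pos (Nat.lt_succ_self k)]
        exact hle i
    · have hce : c k = c (k + 1) := by
        funext i
        simp only [hc]
        have h1 : (i : ℕ) < k := lt_of_lt_of_le i.isLt (Nat.le_of_not_lt hk)
        rw [if_pos h1, if_pos (Nat.lt_succ_of_lt h1)]
      rw [hce]
  have hchain : ∀ n, ∫ ω, φ (Stmt13Aux.V Z (c 0) ω) ∂P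
      ≤ ∫ ω, φ (Stmt13Aux.V Z (c n) ω) ∂P := by
    intro n
    induction n with
    | zero => exact le_refl _
    | succ n ih => exact ih.trans (hstep n)
  have h0 : c 0 = lam := by funext i; simp [hc]
  have hq : c q = ell := by funext i; simp [hc, i.isLt]
  have hfin := hchain q
  rw [h0, hq] at hfin
  exact hfin

end
end
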